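/- Let a_0, ..., a_{n-1} be positive real numbers, and for a sequence w_1, ..., w_n of reals, define the affine maps g_i(v) = B_i v + C_i where B_i = a_0 a_1 ⋯ a_{i-1} (and B_0 = 1, g_0(v) = v) and C_i = Σ_{k=1}^{i} (a_k a_{k+1} ⋯ a_{i-1}) w_k. Let D_i = Σ_{k=1}^{i} (a_k ⋯ a_{i-1}) be the analogous quantity with all w_k = 1, and f_i(v) = B_i v + D_i. If |w_k| ≤ 1 for all k, then min over v ∈ ℝ of max_{0 ≤ i ≤ n} |g_i(v)| is at most min over v ∈ ℝ of max_{0 ≤ i ≤ n} |f_i(v)|. That is, the uniform translation by 1 is the worst perturbation. -/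

import Mathlib

/-- The orbit of the affine recursion `v_{i+1} = a_i v_i + w_{i+1}` starting at `v0`. -/
noncomputable def orb (a w : ℕ → ℝ) (v0 : ℝ) : ℕ → ℝ
  | 0 => v0
  | i + 1 => a i * orb a w v0 i + w (i + 1)

lemma orb_affine (a w : ℕ → ℝ) (x : ℝ) : ∀ i,
    orb a w x i = (∏ k ∈ Finset.range i, a k) * x + orb a w 0 i
  | 0 => by simp [orb]
  | i + 1 => by
    simp only [orb, orb_affine a w x i, Finset.prod_range_succ]
    ring

lemma orb_key (a w : ℕ → ℝ) (ha : ∀ i, 0 < a i) (hw : ∀ k, |w k| ≤ 1) (i : ℕ) :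
    ∀ j, i ≤ j →
    |(∏ k ∈ Finset.range i, a k) * orb a w 0 j
        - (∏ k ∈ Finset.range j, a k) * orb a w 0 i|
      ≤ (∏ k ∈ Finset.range i, a k) * orb a (fun _ => 1) 0 j
        - (∏ k ∈ Finset.range j, a k) * orb a (fun _ => 1) 0 i := by
  intro j hj
  induction j, hj using Nat.le_induction with
  | base => simp
  | succ j hj ih =>
    have hBi : 0 < ∏ k ∈ Finset.range i, a k :=
      Finset.prod_pos (fun k _ => ha k)
    have haj := ha j
    simp only [orb, Finset.prod_range_succ]
    have h1 : (∏ k ∈ Finset.range i, a k) * (a j * orb a w 0 j + w (j + 1))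
        - (∏ k ∈ Finset.range j, a k) * a j * orb a w 0 i
        = a j * ((∏ k ∈ Finset.range i, a k) * orb a w 0 j
            - (∏ k ∈ Finset.range j, a k) * orb a w 0 i)
          + (∏ k ∈ Finset.range i, a k) * w (j + 1) := by ring
    rw [h1]
    calc |a j * ((∏ k ∈ Finset.range i, a k) * orb a w 0 j
            - (∏ k ∈ Finset.range j, a k) * orb a w 0 i)
          + (∏ k ∈ Finset.range i, a k) * w (j + 1)|
        ≤ |a j * ((∏ k ∈ Finset.range i, a k) * orb a w 0 j
            - (∏ k ∈ Finset.range j, a k) * orb a w 0 i)|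
          + |(∏ k ∈ Finset.range i, a k) * w (j + 1)| := abs_add_le _ _
      _ = a j * |(∏ k ∈ Finset.range i, a k) * orb a w 0 j
            - (∏ k ∈ Finset.range j, a k) * orb a w 0 i|
          + (∏ k ∈ Finset.range i, a k) * |w (j + 1)| := by
          rw [abs_mul, abs_mul, abs_of_pos haj, abs_of_pos hBi]
      _ ≤ a j * ((∏ k ∈ Finset.range i, a k) * orb a (fun _ => 1) 0 j
            - (∏ k ∈ Finset.range j, a k) * orb a (fun _ => 1) 0 i)
          + (∏ k ∈ Finset.range i, a k) * 1 := by
          gcongr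
          exact hw _
      _ = (∏ k ∈ Finset.range i, a k) * (a j * orb a (fun _ => 1) 0 j + 1)
          - (∏ k ∈ Finset.range j, a k) * a j * orb a (fun _ => 1) 0 i := by ring

/-- The uniform translation by `1` is the worst perturbation: if `|w_k| ≤ 1` for all `k`,
then the minimal sup-norm of an orbit of the perturbation `{w_i}` is at most that of the
constant perturbation `{1}`. -/
theorem stmt0 (n : ℕ) (a w : ℕ → ℝ) (ha : ∀ i, 0 < a i) (hw : ∀ k, |w k| ≤ 1) :
    (⨅ v0 : ℝ, (Finset.range (n + 1)).sup' Finset.nonempty_range_add_one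
      fun i => |orb a w v0 i|) ≤
    ⨅ v0 : ℝ, (Finset.range (n + 1)).sup' Finset.nonempty_range_add_one
      fun i => |orb a (fun _ => 1) v0 i| := by
  apply le_ciInf
  intro v0
  set S := Finset.range (n + 1) with hS
  set M := S.sup' Finset.nonempty_range_add_one (fun i => |orb a (fun _ => 1) v0 i|) with hM
  set B : ℕ → ℝ := fun i => ∏ k ∈ Finset.range i, a k with hB
  set C : ℕ → ℝ := fun i => orb a w 0 i with hC
  set D : ℕ → ℝ := fun i => orb a (fun _ => 1) 0 i with hD
  have hBpos : ∀ i, 0 < B i := fun i => Finset.prod_pos fun k _ => ha k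
  have hMf : ∀ i ∈ S, |B i * v0 + D i| ≤ M := by
    intro i hi
    rw [hB, hD]
    simp only []
    rw [← orb_affine]
    exact Finset.le_sup' (fun i => |orb a (fun _ => 1) v0 i|) hi
  -- pairwise inequality
  have hE : ∀ i ∈ S, ∀ j ∈ S, B i * C j - B j * C i ≤ (B i + B j) * M := by
    intro i hi j hj
    rcases le_total i j with hij | hij
    · have hk := orb_key a w ha hw i j hij
      have h1 := (abs_le.1 (hMf j hj)).2
      have h2 := (abs_le.1 (hMf i hi)).1
      have h3 : B i * (B j * v0 + D j) ≤ B i * M :=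
        mul_le_mul_of_nonneg_left h1 (hBpos i).le
      have h4 : B j * (-M) ≤ B j * (B i * v0 + D i) :=
        mul_le_mul_of_nonneg_left h2 (hBpos j).le
      have h5 : B i * C j - B j * C i ≤ |B i * C j - B j * C i| := le_abs_self _
      nlinarith [hk, h3, h4, h5]
    · have hk := orb_key a w ha hw j i hij
      have h1 := (abs_le.1 (hMf i hi)).2
      have h2 := (abs_le.1 (hMf j hj)).1
      have h3 : B j * (B i * v0 + D i) ≤ B j * M :=
        mul_le_mul_of_nonneg_left h1 (hBpos j).le
      have h4 : B i * (-M) ≤ B i * (B j * v0 + D j) :=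
        mul_le_mul_of_nonneg_left h2 (hBpos i).le
      have h5 : -(B j * C i - B i * C j) ≤ |B j * C i - B i * C j| := neg_le_abs _
      nlinarith [hk, h3, h4, h5]
  set x := S.sup' Finset.nonempty_range_add_one (fun i => (-M - C i) / B i) with hx
  have hub : ∀ j ∈ S, orb a w x j ≤ M := by
    intro j hj
    obtain ⟨i, hi, hxi⟩ := Finset.exists_mem_eq_sup'
      (Finset.nonempty_range_add_one : S.Nonempty) (fun i => (-M - C i) / B i)
    have hox : orb a w x j = B j * x + C j := orb_affine a w x j
    rw [hox, hx, hxi]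
    have h := hE i hi j hj
    rw [← mul_div_assoc, div_add' _ _ _ (hBpos i).ne', div_le_iff₀ (hBpos i)]
    nlinarith [h]
  have hlb : ∀ j ∈ S, -M ≤ orb a w x j := by
    intro j hj
    have hle : (-M - C j) / B j ≤ x := Finset.le_sup' (fun i => (-M - C i) / B i) hj
    rw [div_le_iff₀ (hBpos j)] at hle
    have hox : orb a w x j = B j * x + C j := orb_affine a w x j
    rw [hox]
    nlinarith [hle]
  have hbdd : BddBelow (Set.range fun v0 : ℝ =>
      S.sup' Finset.nonempty_range_add_one fun i => |orb a w v0 i|) := by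
    refine ⟨0, ?_⟩
    rintro y ⟨v, rfl⟩
    dsimp only
    have h0 : (0 : ℕ) ∈ S := Finset.mem_range.2 (Nat.succ_pos n)
    exact le_trans (abs_nonneg _) (Finset.le_sup' (fun i => |orb a w v i|) h0)
  calc (⨅ v0 : ℝ, S.sup' Finset.nonempty_range_add_one fun i => |orb a w v0 i|)
      ≤ S.sup' Finset.nonempty_range_add_one fun i => |orb a w x i| := ciInf_le hbdd x
    _ ≤ M := by
        apply Finset.sup'_le
        intro j hj
        exact abs_le.2 ⟨hlb j hj, hub j hj⟩
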